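/- Let F and G be CDFs of probability measures μ and ν on ℝ with characteristic functions φ_μ(u) = ∫ e^{iux} dμ and φ_ν(u) = ∫ e^{iux} dν. Then for every u ∈ ℝ and every K > 0: |φ_ν(u) - φ_μ(u)| ≤ 4‖G - F‖ + 2K|u|·‖G - F‖ + 2F(-K) + 2(1 - F(K)), where ‖G - F‖ = sup_x |G(x) - F(x)|. -/

import Mathlib

open MeasureTheory Complex intervalIntegral

namespace CharFunBoundAux

noncomputable def E (u t : ℝ) : ℂ := Complex.exp (Complex.I * u * t)

lemma continuous_E (u : ℝ) : Continuous (E u) := by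
  unfold E; fun_prop

lemma norm_E (u t : ℝ) : ‖E u t‖ = 1 := by
  rw [E, Complex.norm_exp]
  simp [Complex.mul_re]

lemma hasDerivAt_E (u t : ℝ) : HasDerivAt (E u) (Complex.I * u * E u t) t := by
  have h := ((Complex.ofRealCLM.hasDerivAt (x := t)).const_mul (Complex.I * u)).cexp
  convert h using 1
  · rfl
  simp only [Complex.ofRealCLM_apply, Complex.ofReal_one, mul_one, E]
  ring

lemma intervalIntegrable_E (u a b : ℝ) : IntervalIntegrable (E u) volume a b :=
  (continuous_E u).intervalIntegrable a b

lemma integral_deriv_E (u a b : ℝ) :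
    ∫ t in a..b, Complex.I * u * E u t = E u b - E u a := by
  have : ∀ x ∈ Set.uIcc a b, DifferentiableAt ℝ (E u) x := fun x _ =>
    (hasDerivAt_E u x).differentiableAt
  have hd : deriv (E u) = fun t => Complex.I * u * E u t := by
    funext t; exact (hasDerivAt_E u t).deriv
  rw [show (fun t => Complex.I * ↑u * E u t) = deriv (E u) from hd.symm]
  exact intervalIntegral.integral_deriv_eq_sub this
    (hd ▸ ((continuous_const.mul (continuous_E u)).intervalIntegrable a b))

lemma E_eq (u x K : ℝ) :
    E u x = E u K - Complex.I * u * ∫ t in x..K, E u t := by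
  rw [← intervalIntegral.integral_const_mul, integral_deriv_E]; ring

lemma meas_Ioc (μ : Measure ℝ) [IsProbabilityMeasure μ] (F : ℝ → ℝ)
    (hF : ∀ x, F x = (μ (Set.Iic x)).toReal) {a b : ℝ} (hab : a ≤ b) :
    (μ (Set.Ioc a b)).toReal = F b - F a := by
  rw [hF, hF, ← Set.Iic_union_Ioc_eq_Iic hab,
    measure_union (Set.Iic_disjoint_Ioc le_rfl) measurableSet_Ioc,
    ENNReal.toReal_add (measure_ne_top μ _) (measure_ne_top μ _)]
  ring

/-- Fubini step. -/
lemma key_fubini (μ : Measure ℝ) [IsProbabilityMeasure μ] (u K : ℝ) (hK : 0 < K) :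
    ∫ x in Set.Ioc (-K) K, (∫ t in x..K, E u t) ∂μ
      = ∫ t in Set.Ico (-K) K, E u t * ((μ (Set.Ioc (-K) t)).toReal : ℂ) := by
  set f : ℝ → ℝ → ℂ := fun x t => (Set.Ici x).indicator (E u) t with hf
  have hswap :
      ∫ x in Set.Ioc (-K) K, (∫ t in Set.Ico (-K) K, f x t) ∂μ
        = ∫ t in Set.Ico (-K) K, (∫ x in Set.Ioc (-K) K, f x t ∂μ) := by
    apply MeasureTheory.integral_integral_swap
    have hmeas : AEStronglyMeasurable (Function.uncurry f)
        ((μ.restrict (Set.Ioc (-K) K)).prod (volume.restrict (Set.Ico (-K) K))) := by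
      have : Function.uncurry f =
          Set.indicator {p : ℝ × ℝ | p.1 ≤ p.2} (fun p => E u p.2) := by
        funext p
        by_cases h : p.1 ≤ p.2 <;>
          simp [Function.uncurry, hf, Set.indicator, Set.mem_Ici, h]
      rw [this]
      exact (StronglyMeasurable.indicator
        (((continuous_E u).comp continuous_snd).stronglyMeasurable)
        (measurableSet_le measurable_fst measurable_snd)).aestronglyMeasurable
    haveI : IsFiniteMeasure (volume.restrict (Set.Ico (-K) K)) := by
      constructor
      rw [Measure.restrict_apply_univ]
      exact measure_Ico_lt_top
    apply Integrable.mono' (g := fun _ => 1) (integrable_const 1) hmeas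
    filter_upwards with p
    show ‖(Set.Ici p.1).indicator (E u) p.2‖ ≤ 1
    by_cases h : p.2 ∈ Set.Ici p.1
    · rw [Set.indicator_of_mem h]; exact (norm_E u p.2).le
    · rw [Set.indicator_of_notMem h]; simp
  have hL : ∫ x in Set.Ioc (-K) K, (∫ t in Set.Ico (-K) K, f x t) ∂μ
      = ∫ x in Set.Ioc (-K) K, (∫ t in x..K, E u t) ∂μ := by
    apply setIntegral_congr_fun measurableSet_Ioc
    intro x hx
    have hx1 : -K < x := hx.1
    have hx2 : x ≤ K := hx.2
    simp only [hf]
    rw [MeasureTheory.setIntegral_indicator measurableSet_Ici]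
    have hset : Set.Ico (-K) K ∩ Set.Ici x = Set.Ico x K := by
      ext t
      simp only [Set.mem_inter_iff, Set.mem_Ico, Set.mem_Ici]
      constructor
      · rintro ⟨⟨_, h2⟩, h3⟩; exact ⟨h3, h2⟩
      · rintro ⟨h1, h2⟩; exact ⟨⟨le_trans hx1.le h1, h2⟩, h1⟩
    rw [hset, MeasureTheory.integral_Ico_eq_integral_Ioo,
      intervalIntegral.integral_of_le hx2, MeasureTheory.integral_Ioc_eq_integral_Ioo]
  have hR : ∫ t in Set.Ico (-K) K, (∫ x in Set.Ioc (-K) K, f x t ∂μ)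
      = ∫ t in Set.Ico (-K) K, E u t * ((μ (Set.Ioc (-K) t)).toReal : ℂ) := by
    apply setIntegral_congr_fun measurableSet_Ico
    intro t ht
    dsimp only
    have h1 : ∀ x, f x t = (Set.Iic t).indicator (fun _ => E u t) x := by
      intro x
      by_cases h : x ≤ t <;> simp [hf, Set.indicator, Set.mem_Ici, Set.mem_Iic, h]
    have h2 : ∫ x in Set.Ioc (-K) K, f x t ∂μ
        = ∫ x in Set.Ioc (-K) K, (Set.Iic t).indicator (fun _ => E u t) x ∂μ :=
      setIntegral_congr_fun measurableSet_Ioc (fun x _ => h1 x)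
    rw [h2, MeasureTheory.setIntegral_indicator measurableSet_Iic, Set.Ioc_inter_Iic,
      min_eq_right ht.2.le, setIntegral_const]
    rw [real_smul, Measure.real]
    ring
  rw [← hL, hswap, hR]

/-- Integration-by-parts style identity. -/
lemma middle_identity (μ : Measure ℝ) [IsProbabilityMeasure μ] (F : ℝ → ℝ)
    (hF : ∀ x, F x = (μ (Set.Iic x)).toReal) (u K : ℝ) (hK : 0 < K) :
    ∫ x in Set.Ioc (-K) K, E u x ∂μ
      = E u K * ((F K - F (-K) : ℝ) : ℂ)
        - Complex.I * u * ∫ t in (-K)..K, E u t * ((F t - F (-K) : ℝ) : ℂ) := by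
  have hKK : (-K : ℝ) ≤ K := by linarith
  set g : ℝ → ℂ := fun x => ∫ t in x..K, E u t with hg
  have hgcont : Continuous g := by
    have h1 : Continuous fun x => ∫ t in K..x, E u t :=
      intervalIntegral.continuous_primitive (intervalIntegrable_E u) K
    have : g = fun x => -∫ t in K..x, E u t := by
      funext x; exact intervalIntegral.integral_symm K x
    rw [this]; exact h1.neg
  have hgint : IntegrableOn g (Set.Ioc (-K) K) μ := by
    apply Integrable.mono' (g := fun _ => 2 * K) (integrable_const _)
      hgcont.aestronglyMeasurable.restrict
    rw [ae_restrict_iff' measurableSet_Ioc]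
    filter_upwards with x hx
    calc ‖g x‖ ≤ 1 * |K - x| :=
          intervalIntegral.norm_integral_le_of_norm_le_const fun t _ => (norm_E u t).le
      _ ≤ 2 * K := by
          rw [one_mul, _root_.abs_of_nonneg (by linarith [hx.2] : (0:ℝ) ≤ K - x)]
          linarith [hx.1]
  have step1 : ∫ x in Set.Ioc (-K) K, E u x ∂μ
      = ∫ x in Set.Ioc (-K) K, (E u K - Complex.I * u * g x) ∂μ := by
    apply setIntegral_congr_fun measurableSet_Ioc
    intro x _
    exact E_eq u x K
  rw [step1, MeasureTheory.integral_sub (integrableOn_const (C := E u K) (measure_ne_top _ _))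
    (hgint.const_mul _)]
  simp_rw [← smul_eq_mul (a := Complex.I * (u:ℂ)), MeasureTheory.integral_smul]
  rw [setIntegral_const, real_smul, Measure.real, meas_Ioc μ F hF hKK]
  rw [key_fubini μ u K hK]
  have : ∫ t in Set.Ico (-K) K, E u t * ((μ (Set.Ioc (-K) t)).toReal : ℂ)
      = ∫ t in (-K)..K, E u t * ((F t - F (-K) : ℝ) : ℂ) := by
    rw [intervalIntegral.integral_of_le hKK, MeasureTheory.integral_Ioc_eq_integral_Ioo,
      ← MeasureTheory.integral_Ico_eq_integral_Ioo]
    apply setIntegral_congr_fun measurableSet_Ico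
    intro t ht
    dsimp only
    rw [meas_Ioc μ F hF ht.1]
  rw [this]
  rw [smul_eq_mul]
  ring

end CharFunBoundAux

open CharFunBoundAux

theorem charFun_diff_bound (μ ν : Measure ℝ) [IsProbabilityMeasure μ] [IsProbabilityMeasure ν]
    (F G : ℝ → ℝ)
    (hF : ∀ x, F x = (μ (Set.Iic x)).toReal)
    (hG : ∀ x, G x = (ν (Set.Iic x)).toReal)
    (u : ℝ) (K : ℝ) (hK : 0 < K) :
    ‖(∫ x, Complex.exp (Complex.I * u * x) ∂ν) - (∫ x, Complex.exp (Complex.I * u * x) ∂μ)‖ ≤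
      4 * (⨆ x : ℝ, |G x - F x|) + 2 * K * |u| * (⨆ x : ℝ, |G x - F x|)
        + 2 * F (-K) + 2 * (1 - F K) := by
  have hKK : (-K : ℝ) ≤ K := by linarith
  set s : ℝ := ⨆ x : ℝ, |G x - F x| with hs
  -- basic bounds on F and G
  have hbd : ∀ (m : Measure ℝ) [IsProbabilityMeasure m] (H : ℝ → ℝ),
      (∀ x, H x = (m (Set.Iic x)).toReal) → ∀ x, 0 ≤ H x ∧ H x ≤ 1 := by
    intro m _ H hH x
    rw [hH]
    refine ⟨ENNReal.toReal_nonneg, ?_⟩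
    have := ENNReal.toReal_mono (ENNReal.one_ne_top) (prob_le_one (μ := m) (s := Set.Iic x))
    simpa using this
  have hF01 := hbd μ F hF
  have hG01 := hbd ν G hG
  have hbdd : BddAbove (Set.range fun x => |G x - F x|) := by
    refine ⟨2, ?_⟩
    rintro y ⟨x, rfl⟩
    have h1 := hF01 x; have h2 := hG01 x
    rw [abs_le]; constructor <;> [linarith; linarith]
  have hle : ∀ x, |G x - F x| ≤ s := fun x => le_ciSup hbdd x
  have hs0 : 0 ≤ s := le_trans (abs_nonneg _) (hle 0)
  -- integrability of E u
  have hint : ∀ (m : Measure ℝ) [IsProbabilityMeasure m], Integrable (E u) m := by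
    intro m _
    apply Integrable.mono' (integrable_const 1) (continuous_E u).aestronglyMeasurable
    filter_upwards with x
    exact (norm_E u x).le
  set A : Set ℝ := Set.Ioc (-K) K with hA
  have hsplitν : ∫ x, E u x ∂ν = (∫ x in A, E u x ∂ν) + ∫ x in Aᶜ, E u x ∂ν :=
    (integral_add_compl measurableSet_Ioc (hint ν)).symm
  have hsplitμ : ∫ x, E u x ∂μ = (∫ x in A, E u x ∂μ) + ∫ x in Aᶜ, E u x ∂μ :=
    (integral_add_compl measurableSet_Ioc (hint μ)).symm
  -- monotonicity / measurability
  have hmono : ∀ (m : Measure ℝ) [IsProbabilityMeasure m] (H : ℝ → ℝ),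
      (∀ x, H x = (m (Set.Iic x)).toReal) → Monotone H := by
    intro m _ H hH a b hab
    rw [hH, hH]
    exact ENNReal.toReal_mono (measure_ne_top _ _)
      (measure_mono (Set.Iic_subset_Iic.2 hab))
  have hFm : Measurable F := (hmono μ F hF).measurable
  have hGm : Measurable G := (hmono ν G hG).measurable
  -- interval integrability
  have hii : ∀ (H : ℝ → ℝ) (C : ℝ), Measurable H → (∀ x, |H x| ≤ C) →
      IntervalIntegrable (fun t => E u t * ((H t : ℝ) : ℂ)) volume (-K) K := by
    intro H C hm hb
    rw [intervalIntegrable_iff]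
    haveI : IsFiniteMeasure (volume.restrict (Set.uIoc (-K) K)) := by
      constructor
      rw [Measure.restrict_apply_univ, Set.uIoc]
      exact measure_Ioc_lt_top
    apply Integrable.mono' (integrable_const C)
    · exact (((continuous_E u).measurable).mul
        (Complex.measurable_ofReal.comp hm)).aestronglyMeasurable.restrict
    · filter_upwards with t
      rw [norm_mul, norm_E, one_mul, Complex.norm_real, Real.norm_eq_abs]
      exact hb t
  have hiF : IntervalIntegrable (fun t => E u t * ((F t - F (-K) : ℝ) : ℂ)) volume (-K) K := by
    apply hii (fun t => F t - F (-K)) 2 (hFm.sub measurable_const)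
    intro t
    have h1 := hF01 t; have h2 := hF01 (-K)
    rw [abs_le]; constructor <;> [linarith; linarith]
  have hiG : IntervalIntegrable (fun t => E u t * ((G t - G (-K) : ℝ) : ℂ)) volume (-K) K := by
    apply hii (fun t => G t - G (-K)) 2 (hGm.sub measurable_const)
    intro t
    have h1 := hG01 t; have h2 := hG01 (-K)
    rw [abs_le]; constructor <;> [linarith; linarith]
  have hiD : IntervalIntegrable (fun t => E u t * ((G t - F t : ℝ) : ℂ)) volume (-K) K :=
    hii _ s (hGm.sub hFm) hle
  have hEint : Complex.I * u * ∫ t in (-K)..K, E u t = E u K - E u (-K) := by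
    rw [← intervalIntegral.integral_const_mul, integral_deriv_E]
  -- the middle difference
  have hmid : (∫ x in A, E u x ∂ν) - (∫ x in A, E u x ∂μ)
      = E u K * ((G K - F K : ℝ) : ℂ) - E u (-K) * ((G (-K) - F (-K) : ℝ) : ℂ)
        - Complex.I * u * ∫ t in (-K)..K, E u t * ((G t - F t : ℝ) : ℂ) := by
    rw [hA, middle_identity ν G hG u K hK, middle_identity μ F hF u K hK]
    have h1 : (∫ t in (-K)..K, E u t * ((G t - G (-K) : ℝ) : ℂ))
        - ∫ t in (-K)..K, E u t * ((F t - F (-K) : ℝ) : ℂ)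
        = (∫ t in (-K)..K, E u t * ((G t - F t : ℝ) : ℂ))
          - ((G (-K) - F (-K) : ℝ) : ℂ) * ∫ t in (-K)..K, E u t := by
      rw [← intervalIntegral.integral_sub hiG hiF]
      have hpt : ∀ t, E u t * ((G t - G (-K) : ℝ) : ℂ) - E u t * ((F t - F (-K) : ℝ) : ℂ)
          = E u t * ((G t - F t : ℝ) : ℂ) - ((G (-K) - F (-K) : ℝ) : ℂ) * E u t := by
        intro t; push_cast; ring
      simp_rw [hpt]
      rw [intervalIntegral.integral_sub hiD ((intervalIntegrable_E u (-K) K).const_mul _),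
        intervalIntegral.integral_const_mul]
    push_cast at h1 hEint ⊢
    linear_combination (-(Complex.I * (u : ℂ))) * h1
      + ((G (-K) : ℂ) - (F (-K) : ℂ)) * hEint
  have hmidnorm : ‖(∫ x in A, E u x ∂ν) - (∫ x in A, E u x ∂μ)‖
      ≤ s + s + |u| * (s * (2 * K)) := by
    rw [hmid]
    have hterm : ∀ x : ℝ, ‖E u x * ((G x - F x : ℝ) : ℂ)‖ ≤ s := by
      intro x
      rw [norm_mul, norm_E, one_mul, Complex.norm_real, Real.norm_eq_abs]
      exact hle x
    have hint2 : ‖Complex.I * u * ∫ t in (-K)..K, E u t * ((G t - F t : ℝ) : ℂ)‖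
        ≤ |u| * (s * (2 * K)) := by
      rw [norm_mul, norm_mul, Complex.norm_I, one_mul, Complex.norm_real, Real.norm_eq_abs]
      apply mul_le_mul_of_nonneg_left _ (abs_nonneg u)
      have := intervalIntegral.norm_integral_le_of_norm_le_const
        (a := -K) (b := K) (C := s) (f := fun t => E u t * ((G t - F t : ℝ) : ℂ))
        (fun t _ => hterm t)
      calc ‖∫ t in (-K)..K, E u t * ((G t - F t : ℝ) : ℂ)‖ ≤ s * |K - -K| := this
        _ = s * (2 * K) := by rw [_root_.abs_of_pos (by linarith : (0:ℝ) < K - -K)]; ring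
    calc ‖E u K * ((G K - F K : ℝ) : ℂ) - E u (-K) * ((G (-K) - F (-K) : ℝ) : ℂ)
          - Complex.I * u * ∫ t in (-K)..K, E u t * ((G t - F t : ℝ) : ℂ)‖
        ≤ ‖E u K * ((G K - F K : ℝ) : ℂ) - E u (-K) * ((G (-K) - F (-K) : ℝ) : ℂ)‖
          + ‖Complex.I * u * ∫ t in (-K)..K, E u t * ((G t - F t : ℝ) : ℂ)‖ :=
          norm_sub_le _ _
      _ ≤ ‖E u K * ((G K - F K : ℝ) : ℂ)‖ + ‖E u (-K) * ((G (-K) - F (-K) : ℝ) : ℂ)‖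
          + ‖Complex.I * u * ∫ t in (-K)..K, E u t * ((G t - F t : ℝ) : ℂ)‖ := by
          have := norm_sub_le (E u K * ((G K - F K : ℝ) : ℂ))
            (E u (-K) * ((G (-K) - F (-K) : ℝ) : ℂ))
          linarith
      _ ≤ s + s + |u| * (s * (2 * K)) := by
          have h1 := hterm K; have h2 := hterm (-K)
          linarith
  -- tail bounds
  have htail : ∀ (m : Measure ℝ) [IsProbabilityMeasure m] (H : ℝ → ℝ),
      (∀ x, H x = (m (Set.Iic x)).toReal) →
      ‖∫ x in Aᶜ, E u x ∂m‖ ≤ 1 - (H K - H (-K)) := by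
    intro m _ H hH
    have h1 : ‖∫ x in Aᶜ, E u x ∂m‖ ≤ 1 * (m Aᶜ).toReal :=
      norm_setIntegral_le_of_norm_le_const (measure_lt_top _ _) (fun x _ => (norm_E u x).le)
    have h2 : (m Aᶜ).toReal = 1 - (H K - H (-K)) := by
      rw [hA, measure_compl measurableSet_Ioc (measure_ne_top _ _), measure_univ,
        ENNReal.toReal_sub_of_le (prob_le_one) (ENNReal.one_ne_top), ENNReal.toReal_one,
        meas_Ioc m H hH hKK]
    rw [h2] at h1
    linarith
  have htailν := htail ν G hG
  have htailμ := htail μ F hF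
  -- assemble
  have habsK := abs_le.1 (hle K)
  have habsK' := abs_le.1 (hle (-K))
  have hsplit : (∫ x, E u x ∂ν) - (∫ x, E u x ∂μ)
      = ((∫ x in A, E u x ∂ν) - (∫ x in A, E u x ∂μ))
        + ((∫ x in Aᶜ, E u x ∂ν) - (∫ x in Aᶜ, E u x ∂μ)) := by
    rw [hsplitν, hsplitμ]; ring
  calc ‖(∫ x, E u x ∂ν) - (∫ x, E u x ∂μ)‖
      ≤ ‖(∫ x in A, E u x ∂ν) - (∫ x in A, E u x ∂μ)‖
        + (‖∫ x in Aᶜ, E u x ∂ν‖ + ‖∫ x in Aᶜ, E u x ∂μ‖) := by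
        rw [hsplit]
        have := norm_add_le ((∫ x in A, E u x ∂ν) - (∫ x in A, E u x ∂μ))
          ((∫ x in Aᶜ, E u x ∂ν) - (∫ x in Aᶜ, E u x ∂μ))
        have h2 := norm_sub_le (∫ x in Aᶜ, E u x ∂ν) (∫ x in Aᶜ, E u x ∂μ)
        linarith
    _ ≤ 4 * s + 2 * K * |u| * s + 2 * F (-K) + 2 * (1 - F K) := by
        have h1 := htailν; have h2 := htailμ
        nlinarith [hmidnorm, abs_nonneg u, hs0, hK]
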